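/- Let X be a G-space, A⊆X a closed invariant subset, and H a closed subgroup of G. Then _{A^H}cat_H(X^H) ≤ _Acat_G(X), where X^H and A^H denote the H-fixed point sets (with the residual action considered). -/

import Mathlib

open unitInterval Set

namespace PaperTC

variable (G : Type*) {X : Type*} [Group G] [TopologicalSpace X] [MulAction G X]

/-- A set is invariant under the `G`-action. -/
def InvSet (U : Set X) : Prop := ∀ (g : G), ∀ x ∈ U, g • x ∈ U

/-- An open invariant set `U` is `G`-compressible into `A`: the inclusion `U ⊆ X` is
`G`-homotopic to a map with values in `A`. -/
def Compressible (A U : Set X) : Prop :=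
  ∃ H : C(↥U × I, X),
    (∀ u : ↥U, H (u, 0) = (u : X)) ∧
    (∀ u : ↥U, H (u, 1) ∈ A) ∧
    (∀ (g : G) (u v : ↥U) (t : I), (v : X) = g • (u : X) → H (v, t) = g • H (u, t))

/-- `X` can be covered by `n` open invariant sets, each `G`-compressible into `A`. -/
def CatLE (A : Set X) (n : ℕ) : Prop :=
  ∃ U : Fin n → Set X, (⋃ i, U i) = Set.univ ∧
    ∀ i, IsOpen (U i) ∧ InvSet G (U i) ∧ Compressible G A (U i)

/-- The `A`-Lusternik–Schnirelmann `G`-category of `X`. -/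
noncomputable def Cat (A : Set X) : ℕ∞ :=
  sInf {n : ℕ∞ | ∃ m : ℕ, n = (m : ℕ∞) ∧ CatLE G A m}

/-- The residual action of `H` on the `H`-fixed point set `X^H` (it is trivial
on `X^H`, i.e. each `h ∈ H` acts as it does on `X`, fixing every point). -/
def fixedAction {G : Type*} (X : Type*) [Group G] [TopologicalSpace X] [MulAction G X]
    (H : Subgroup G) : MulAction ↥H ↥(MulAction.fixedPoints ↥H X) where
  smul h x := ⟨h • (x : X), by
    intro h'
    have hx := x.2 h
    rw [hx]
    exact x.2 h'⟩
  one_smul x := by ext; exact one_smul _ (x : X)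
  mul_smul h₁ h₂ x := by ext; exact mul_smul h₁ h₂ (x : X)

theorem stmt_4 {G X : Type*} [Group G] [TopologicalSpace G] [CompactSpace G]
    [TopologicalSpace X] [MulAction G X]
    (H : Subgroup G) (hH : IsClosed (H : Set G))
    (A : Set X) (hA : IsClosed A) (hAinv : InvSet G A) :
    (@Cat ↥H ↥(MulAction.fixedPoints ↥H X) _ _ (fixedAction X H)
      ((Subtype.val : ↥(MulAction.fixedPoints ↥H X) → X) ⁻¹' A)) ≤ Cat G A := by
  letI : MulAction ↥H ↥(MulAction.fixedPoints ↥H X) := fixedAction X H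
  apply sInf_le_sInf
  rintro n ⟨m, rfl, U, hUcov, hU⟩
  refine ⟨m, rfl, fun i => Subtype.val ⁻¹' U i, ?_, fun i => ?_⟩
  · rw [← Set.preimage_iUnion, hUcov, Set.preimage_univ]
  obtain ⟨hopen, hinv, F, hF0, hF1, hFeq⟩ := hU i
  have hsmul : ∀ (h : ↥H) (x : ↥(MulAction.fixedPoints ↥H X)),
      ((h • x : ↥(MulAction.fixedPoints ↥H X)) : X) = (h : G) • (x : X) := fun h x => rfl
  refine ⟨hopen.preimage continuous_subtype_val, ?_, ?_⟩
  · intro h x hx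
    show Subtype.val (h • x) ∈ U i
    rw [hsmul]
    exact hinv h x.1 hx
  · -- the compressing homotopy, restricted to the fixed set
    have hfix : ∀ (u : ↥((Subtype.val : ↥(MulAction.fixedPoints ↥H X) → X) ⁻¹' U i)) (t : I),
        F (⟨u.1.1, u.2⟩, t) ∈
          MulAction.fixedPoints ↥H X := by
      intro u t h
      have := hFeq h ⟨u.1.1, u.2⟩
        ⟨u.1.1, u.2⟩ t
      have hval : (u.1.1 : X) =
          (h : G) • (u.1.1 : X) :=
        (u.1.2 h).symm
      exact (this hval).symm
    refine ⟨⟨fun p => ⟨F (⟨p.1.1.1, p.1.2⟩, p.2),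
        hfix p.1 p.2⟩, ?_⟩, ?_, ?_, ?_⟩
    · exact Continuous.subtype_mk (F.continuous.comp (by fun_prop)) _
    · intro u
      ext
      exact hF0 _
    · intro u
      exact hF1 _
    · intro h u v t hvu
      ext
      show _ = (h : G) • (_ : X)
      exact hFeq h _ _ t (congrArg Subtype.val hvu)
end PaperTC
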